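/- Let T be a finite type set with |T| = m, let f be the uniform distribution on T, let O be a finite outcome set, and let v : T × O → ℝ≥0 be a valuation. For every ε ≥ 0 and every mechanism M on this data that is ε-BIC and IR, there exists a mechanism M' on the same data that is BIC and IR and satisfies W(M') ≥ W(M) and R(M') ≥ R(M) − m·ε. -/

import Mathlib

open Finset

namespace EpsBICAux

variable {T : Type}

/-- Sum of `g` along consecutive pairs of a list. -/
def chainSum (g : T → T → ℝ) : List T → ℝ
  | [] => 0
  | [_] => 0
  | a :: b :: l => g a b + chainSum g (b :: l)

@[simp] lemma chainSum_nil (g : T → T → ℝ) : chainSum g [] = 0 := rfl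
@[simp] lemma chainSum_singleton (g : T → T → ℝ) (a : T) : chainSum g [a] = 0 := rfl
@[simp] lemma chainSum_cons_cons (g : T → T → ℝ) (a b : T) (l : List T) :
    chainSum g (a :: b :: l) = g a b + chainSum g (b :: l) := rfl

lemma chainSum_append (g : T → T → ℝ) :
    ∀ (xs : List T) (y : T) (ys : List T),
      chainSum g (xs ++ y :: ys) = chainSum g (xs ++ [y]) + chainSum g (y :: ys)
  | [], y, ys => by simp
  | [a], y, ys => by simp
  | a :: b :: xs, y, ys => by
      have ih := chainSum_append g (b :: xs) y ys
      simp only [List.cons_append, chainSum_cons_cons] at *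
      rw [ih]; ring

lemma chainSum_concat (g : T → T → ℝ) :
    ∀ (xs : List T) (hxs : xs ≠ []) (y : T),
      chainSum g (xs ++ [y]) = chainSum g xs + g (xs.getLast hxs) y
  | [], hxs, y => absurd rfl hxs
  | [a], _, y => by simp
  | a :: b :: xs, _, y => by
      have ih := chainSum_concat g (b :: xs) (List.cons_ne_nil _ _) y
      simp only [List.cons_append, chainSum_cons_cons] at *
      rw [ih, List.getLast_cons (List.cons_ne_nil _ _)]
      ring

lemma chainSum_eq_sum (g : T → T → ℝ) (t₀ : T) :
    ∀ l : List T, chainSum g l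
      = ∑ i ∈ Finset.range (l.length - 1), g (l.getD i t₀) (l.getD (i + 1) t₀)
  | [] => by simp
  | [a] => by simp
  | a :: b :: l => by
      rw [chainSum_cons_cons, chainSum_eq_sum g t₀ (b :: l)]
      have hlen : (a :: b :: l).length - 1 = ((b :: l).length - 1) + 1 := by
        simp
      rw [hlen, Finset.sum_range_succ']
      simp only [List.getD_cons_succ, List.getD_cons_zero]
      ring

lemma map_sum_eq (f : T → ℝ) (t₀ : T) :
    ∀ l : List T, (l.map f).sum = ∑ i ∈ Finset.range l.length, f (l.getD i t₀)
  | [] => by simp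
  | a :: l => by
      rw [List.map_cons, List.sum_cons, map_sum_eq f t₀ l, List.length_cons,
        Finset.sum_range_succ']
      simp only [List.getD_cons_succ, List.getD_cons_zero]
      ring

lemma chainSum_cycle [Fintype T] [DecidableEq T] (g : T → T → ℝ)
    (hdiag : ∀ t, g t t = 0)
    (hg : ∀ σ : Equiv.Perm T, ∑ s, g s (σ s) ≤ 0)
    (a : T) (l : List T) (h : (a :: l).Nodup) :
    chainSum g ((a :: l) ++ [a]) ≤ 0 := by
  have key : chainSum g ((a :: l) ++ [a])
      = ∑ s, g s ((a :: l).formPerm s) := by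
    rw [chainSum_eq_sum g a]
    have hlen : ((a :: l) ++ [a]).length - 1 = (a :: l).length := by simp
    rw [hlen]
    have step : ∀ i ∈ Finset.range (a :: l).length,
        g (((a :: l) ++ [a]).getD i a) (((a :: l) ++ [a]).getD (i + 1) a)
          = g ((a :: l).getD i a) ((a :: l).formPerm ((a :: l).getD i a)) := by
      intro i hi
      rw [Finset.mem_range] at hi
      have h1 : ((a :: l) ++ [a]).getD i a = (a :: l).getD i a :=
        List.getD_append _ _ _ _ hi
      have h2 : ((a :: l) ++ [a]).getD (i + 1) a
          = (a :: l).formPerm ((a :: l).getD i a) := by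
        have hmod : (i + 1) % (a :: l).length < (a :: l).length :=
          Nat.mod_lt _ (by omega)
        rw [List.getD_eq_getElem _ a hi, List.formPerm_apply_getElem _ h i hi,
          ← List.getD_eq_getElem _ a hmod]
        by_cases hi1 : i + 1 < (a :: l).length
        · rw [Nat.mod_eq_of_lt hi1, List.getD_append _ _ _ _ hi1]
        · have heq : i + 1 = (a :: l).length := by omega
          rw [heq, Nat.mod_self]
          simp [List.getD_append_right]
      rw [h1, h2]
    rw [Finset.sum_congr rfl step]
    have hmap : ∑ i ∈ Finset.range (a :: l).length,
        g ((a :: l).getD i a) ((a :: l).formPerm ((a :: l).getD i a))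
        = ((a :: l).map (fun s => g s ((a :: l).formPerm s))).sum :=
      (map_sum_eq (fun s => g s ((a :: l).formPerm s)) a (a :: l)).symm
    rw [hmap, ← List.sum_toFinset _ h]
    refine Finset.sum_subset (Finset.subset_univ _) ?_
    intro s _ hs
    rw [List.mem_toFinset] at hs
    rw [List.formPerm_apply_of_notMem hs, hdiag]
  rw [key]
  exact hg _

end EpsBICAux

/-- For a single agent with uniform type distribution over `m` types,
every `ε`-BIC and IR mechanism can be transformed into a BIC and IR mechanism with
at least the same expected social welfare and expected revenue loss at most `m·ε`. -/
theorem epsBIC_to_BIC_uniform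
    {T O : Type} [Fintype T] [Fintype O] [Nonempty T]
    (m : ℕ) (hm : Fintype.card T = m)
    (v : T → O → ℝ) (hv : ∀ t o, 0 ≤ v t o)
    (ε : ℝ) (hε : 0 ≤ ε)
    (x : T → O → ℝ) (p : T → ℝ)
    (hx0 : ∀ t o, 0 ≤ x t o) (hx1 : ∀ t, ∑ o, x t o = 1)
    (hp : ∀ t, 0 ≤ p t)
    -- M is ε-BIC
    (hBIC : ∀ t t' : T,
      (∑ o, x t o * v t o) - p t ≥ (∑ o, x t' o * v t o) - p t' - ε)
    -- M is IR
    (hIR : ∀ t : T, 0 ≤ (∑ o, x t o * v t o) - p t) :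
    ∃ (x' : T → O → ℝ) (p' : T → ℝ),
      (∀ t o, 0 ≤ x' t o) ∧ (∀ t, ∑ o, x' t o = 1) ∧ (∀ t, 0 ≤ p' t) ∧
      -- M' is BIC
      (∀ t t' : T,
        (∑ o, x' t o * v t o) - p' t ≥ (∑ o, x' t' o * v t o) - p' t') ∧
      -- M' is IR
      (∀ t : T, 0 ≤ (∑ o, x' t o * v t o) - p' t) ∧
      -- W(M') ≥ W(M)
      (∑ t, (1 / (m : ℝ)) * ∑ o, x' t o * v t o)
        ≥ (∑ t, (1 / (m : ℝ)) * ∑ o, x t o * v t o) ∧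
      -- R(M') ≥ R(M) − m·ε
      (∑ t, (1 / (m : ℝ)) * p' t) ≥ (∑ t, (1 / (m : ℝ)) * p t) - m * ε := by
  classical
  have hm1 : 1 ≤ m := by rw [← hm]; exact Fintype.card_pos
  have hmR : (0 : ℝ) < m := by exact_mod_cast Nat.lt_of_lt_of_le Nat.zero_lt_one hm1
  set A : T → T → ℝ := fun t s => ∑ o, x s o * v t o with hA
  have hA0 : ∀ t s, 0 ≤ A t s := fun t s =>
    Finset.sum_nonneg fun o _ => mul_nonneg (hx0 _ _) (hv _ _)
  obtain ⟨π, -, hπ⟩ := Finset.exists_max_image (Finset.univ : Finset (Equiv.Perm T))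
    (fun σ => ∑ t, A t (σ t)) ⟨1, Finset.mem_univ 1⟩
  have hπ' : ∀ σ : Equiv.Perm T, ∑ t, A t (σ t) ≤ ∑ t, A t (π t) :=
    fun σ => hπ σ (Finset.mem_univ σ)
  set g : T → T → ℝ := fun t s => A t (π s) - A s (π s) with hg
  have hgdiag : ∀ t, g t t = 0 := fun t => sub_self _
  have hgsum : ∀ σ : Equiv.Perm T, ∑ s, g s (σ s) ≤ 0 := by
    intro σ
    have h1 : ∑ s, A s (π (σ s)) ≤ ∑ s, A s (π s) := by
      simpa [Equiv.Perm.mul_apply] using hπ' (π * σ)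
    have h2 : ∑ s, A (σ s) (π (σ s)) = ∑ s, A s (π s) :=
      Equiv.sum_comp σ (fun s => A s (π s))
    have h3 : ∑ s, g s (σ s) = ∑ s, A s (π (σ s)) - ∑ s, A (σ s) (π (σ s)) := by
      rw [← Finset.sum_sub_distrib]
    rw [h3, h2]; linarith
  set u : T → ℝ := fun t => A t t - p t with hu
  have hu0 : ∀ t, 0 ≤ u t := by
    intro t; simp only [hu, hA]; exact hIR t
  set δ : T → ℝ := fun s => A s (π s) - p (π s) - u s with hδ
  have hδε : ∀ s, δ s ≤ ε := by
    intro s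
    have h1 := hBIC s (π s)
    simp only [hδ, hu, hA]
    linarith
  set D : ℝ := ∑ s, δ s with hD
  have hDeq : D = ∑ s, (A s (π s) - A s s) := by
    have hpp : ∑ s, p (π s) = ∑ s, p s := Equiv.sum_comp π p
    have h1 : ∀ s : T, δ s = (A s (π s) - A s s) + (p s - p (π s)) := by
      intro s; simp only [hδ, hu]; ring
    rw [hD, Finset.sum_congr rfl fun s _ => h1 s, Finset.sum_add_distrib,
      Finset.sum_sub_distrib, Finset.sum_sub_distrib, hpp]
    ring
  have hD0 : 0 ≤ D := by
    have h1 : ∑ t, A t t ≤ ∑ t, A t (π t) := by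
      simpa using hπ' 1
    rw [hDeq, Finset.sum_sub_distrib]
    linarith
  -- the set of chain values
  set S : T → Set ℝ :=
    fun t => {r | ∃ l : List T, (t :: l).Nodup ∧ r = EpsBICAux.chainSum g (t :: l)} with hS
  have hmemS : ∀ (t : T) (l : List T), (t :: l).Nodup →
      EpsBICAux.chainSum g (t :: l) ∈ S t := by
    intro t l h
    simp only [hS, Set.mem_setOf_eq]
    exact ⟨l, h, rfl⟩
  have hSne : ∀ t, (S t).Nonempty := fun t => ⟨_, hmemS t [] (by simp)⟩
  -- telescoping upper bound along a chain
  have tele : ∀ (l : List T) (t : T),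
      EpsBICAux.chainSum g (t :: l)
        ≤ u t - u ((t :: l).getLast (List.cons_ne_nil _ _))
          - (l.map δ).sum + l.length * ε := by
    intro l
    induction l with
    | nil => intro t; simp
    | cons b l' ih =>
      intro t
      have hedge : g t b ≤ u t - u b - δ b + ε := by
        have h1 := hBIC t (π b)
        simp only [hg, hδ, hu, hA]
        linarith
      have h2 := ih b
      have hlast : (t :: b :: l').getLast (List.cons_ne_nil _ _)
          = (b :: l').getLast (List.cons_ne_nil _ _) := List.getLast_cons _
      rw [EpsBICAux.chainSum_cons_cons, hlast]
      simp only [List.map_cons, List.sum_cons, List.length_cons]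
      push_cast
      linarith
  -- bound using distinctness (B2)
  have B2 : ∀ (t : T) (l : List T), (t :: l).Nodup →
      EpsBICAux.chainSum g (t :: l) ≤ u t - D + m * ε := by
    intro t l hnd
    have h1 := tele l t
    have hnd' : l.Nodup := hnd.of_cons
    have hcard : l.toFinset.card = l.length := List.toFinset_card_of_nodup hnd'
    have hlen_le : l.length ≤ m := by
      rw [← hcard, ← hm]; exact Finset.card_le_univ _
    have hsum_l : (l.map δ).sum = ∑ s ∈ l.toFinset, δ s :=
      (List.sum_toFinset _ hnd').symm
    have hcompl : ∑ s ∈ l.toFinsetᶜ, δ s ≤ ((m : ℝ) - l.length) * ε := by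
      have hcard' : (l.toFinsetᶜ).card = m - l.length := by
        rw [Finset.card_compl, hcard, hm]
      have h3 : ∑ s ∈ l.toFinsetᶜ, δ s ≤ (l.toFinsetᶜ).card • ε :=
        Finset.sum_le_card_nsmul _ _ _ (fun s _ => hδε s)
      rw [hcard', nsmul_eq_mul] at h3
      have h4 : ((m - l.length : ℕ) : ℝ) = (m : ℝ) - l.length :=
        Nat.cast_sub hlen_le
      rw [h4] at h3
      exact h3
    have hDsplit : ∑ s ∈ l.toFinset, δ s + ∑ s ∈ l.toFinsetᶜ, δ s = D :=
      Finset.sum_add_sum_compl _ _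
    have hulast := hu0 ((t :: l).getLast (List.cons_ne_nil _ _))
    have hlenR : (l.length : ℝ) ≤ m := by exact_mod_cast hlen_le
    rw [hsum_l] at h1
    nlinarith [h1, hcompl, hDsplit, hulast]
  -- bound by A t (π t) (B1)
  have B1 : ∀ (t : T) (l : List T), (t :: l).Nodup →
      EpsBICAux.chainSum g (t :: l) ≤ A t (π t) := by
    intro t l hnd
    have hcyc := EpsBICAux.chainSum_cycle g hgdiag hgsum t l hnd
    have hconcat := EpsBICAux.chainSum_concat g (t :: l) (List.cons_ne_nil _ _) t
    have hglast : g ((t :: l).getLast (List.cons_ne_nil _ _)) t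
        = A ((t :: l).getLast (List.cons_ne_nil _ _)) (π t) - A t (π t) := rfl
    have hAe := hA0 ((t :: l).getLast (List.cons_ne_nil _ _)) (π t)
    rw [hconcat, hglast] at hcyc
    linarith
  set U : T → ℝ := fun t => sSup (S t) with hU
  have hbdd : ∀ t, BddAbove (S t) := by
    intro t
    refine ⟨u t - D + m * ε, fun r hr => ?_⟩
    simp only [hS, Set.mem_setOf_eq] at hr
    obtain ⟨l, hnd, rfl⟩ := hr
    exact B2 t l hnd
  have hU0 : ∀ t, 0 ≤ U t := by
    intro t
    have h0 := le_csSup (hbdd t) (hmemS t [] (by simp))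
    simpa [hU] using h0
  have hUB2 : ∀ t, U t ≤ u t - D + m * ε := by
    intro t
    simp only [hU]
    refine csSup_le (hSne t) fun r hr => ?_
    simp only [hS, Set.mem_setOf_eq] at hr
    obtain ⟨l, hnd, rfl⟩ := hr
    exact B2 t l hnd
  have hUB1 : ∀ t, U t ≤ A t (π t) := by
    intro t
    simp only [hU]
    refine csSup_le (hSne t) fun r hr => ?_
    simp only [hS, Set.mem_setOf_eq] at hr
    obtain ⟨l, hnd, rfl⟩ := hr
    exact B1 t l hnd
  have hUkey : ∀ t s : T, U s + g t s ≤ U t := by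
    intro t s
    have hstep : ∀ r ∈ S s, r ≤ U t - g t s := by
      intro r hr
      simp only [hS, Set.mem_setOf_eq] at hr
      obtain ⟨l, hnd, rfl⟩ := hr
      by_cases hmem : t ∈ s :: l
      · obtain ⟨l₁, l₂, hsplit⟩ := List.append_of_mem hmem
        have hnda : (l₁ ++ t :: l₂).Nodup := hsplit ▸ hnd
        rw [List.nodup_append] at hnda
        obtain ⟨h1a, h2a, h3a⟩ := hnda
        have htl1 : t ∉ l₁ := fun hmem1 => h3a t hmem1 t List.mem_cons_self rfl
        have hndtl1 : (t :: l₁).Nodup := List.nodup_cons.mpr ⟨htl1, h1a⟩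
        have e1 : t :: s :: l = (t :: l₁) ++ t :: l₂ := by
          rw [hsplit]; simp
        have e2 : EpsBICAux.chainSum g (t :: s :: l)
            = EpsBICAux.chainSum g ((t :: l₁) ++ [t])
              + EpsBICAux.chainSum g (t :: l₂) := by
          rw [e1]; exact EpsBICAux.chainSum_append g (t :: l₁) t l₂
        have hcyc := EpsBICAux.chainSum_cycle g hgdiag hgsum t l₁ hndtl1
        have hle := le_csSup (hbdd t) (hmemS t l₂ h2a)
        have e3 : EpsBICAux.chainSum g (t :: s :: l)
            = g t s + EpsBICAux.chainSum g (s :: l) :=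
          EpsBICAux.chainSum_cons_cons g t s l
        rw [e3] at e2
        simp only [hU] at hle ⊢
        linarith
      · have hnd3 : (t :: s :: l).Nodup := List.nodup_cons.mpr ⟨hmem, hnd⟩
        have h4 := le_csSup (hbdd t) (hmemS t (s :: l) hnd3)
        rw [EpsBICAux.chainSum_cons_cons] at h4
        simp only [hU] at h4 ⊢
        linarith
    have h5 := csSup_le (hSne s) hstep
    simp only [hU] at h5 ⊢
    linarith [h5]
  refine ⟨fun t => x (π t), fun t => A t (π t) - U t,
    fun t o => hx0 _ _, fun t => hx1 _, ?_, ?_, ?_, ?_, ?_⟩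
  · intro t
    show 0 ≤ A t (π t) - U t
    linarith [hUB1 t]
  · intro t s
    have hk := hUkey t s
    simp only [hg, hA] at hk ⊢
    linarith
  · intro t
    have := hU0 t
    simp only [hA]
    linarith
  · -- welfare
    have h1 : ∑ t, A t t ≤ ∑ t, A t (π t) := by simpa using hπ' 1
    simp only [hA] at h1
    rw [ge_iff_le, ← Finset.mul_sum, ← Finset.mul_sum]
    exact mul_le_mul_of_nonneg_left h1 (by positivity)
  · -- revenue
    have hm0 : (m : ℝ) ≠ 0 := ne_of_gt hmR
    have hpt : ∀ t : T, p t + (A t (π t) - A t t) + (D - m * ε) ≤ A t (π t) - U t := by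
      intro t
      have h1 := hUB2 t
      simp only [hu] at h1
      linarith
    have hs := Finset.sum_le_sum (fun t (_ : t ∈ Finset.univ) => hpt t)
    have hsum1 : ∑ t : T, (p t + (A t (π t) - A t t) + (D - m * ε))
        = (∑ t, p t) + (∑ t : T, (A t (π t) - A t t)) + m * (D - m * ε) := by
      rw [Finset.sum_add_distrib, Finset.sum_add_distrib, Finset.sum_const,
        Finset.card_univ, hm, nsmul_eq_mul]
    rw [hsum1, ← hDeq] at hs
    have hmD : 0 ≤ (m : ℝ) * D := mul_nonneg (le_of_lt hmR) hD0
    have hs2 : (∑ t, p t) - m * (m * ε) ≤ ∑ t, (A t (π t) - U t) := by nlinarith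
    rw [ge_iff_le, ← Finset.mul_sum, ← Finset.mul_sum]
    have h6 := mul_le_mul_of_nonneg_left hs2 (le_of_lt (one_div_pos.mpr hmR))
    have h7 : (1 / (m : ℝ)) * ((∑ t, p t) - m * (m * ε))
        = (1 / (m : ℝ)) * (∑ t, p t) - m * ε := by
      field_simp
    rw [h7] at h6
    exact h6
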